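/- Let U and V be Hermitian complex n×n matrices, T an arbitrary complex n×n matrix, and 1 < p, q < ∞ with 1/p + 1/q = 1. Then |Tr[T U T* V]| ≤ Tr[T*T |U|^p]^{1/p} · Tr[T T* |V|^q]^{1/q}. -/

import Mathlib

open Matrix MeasureTheory
open scoped ComplexOrder ENNReal RealInnerProductSpace

/-- The modulus `|A| = (Aᴴ A)^(1/2)` of a complex matrix. -/
noncomputable def matAbs {n : ℕ} (A : Matrix (Fin n) (Fin n) ℂ) : Matrix (Fin n) (Fin n) ℂ :=
  ((Matrix.posSemidef_conjTranspose_mul_self A).1.eigenvectorUnitary : Matrix (Fin n) (Fin n) ℂ) *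
    Matrix.diagonal ((↑) ∘ (√·) ∘ (Matrix.posSemidef_conjTranspose_mul_self A).1.eigenvalues) *
    (star (Matrix.posSemidef_conjTranspose_mul_self A).1.eigenvectorUnitary : Matrix (Fin n) (Fin n) ℂ)

lemma matAbs_posSemidef {n : ℕ} (A : Matrix (Fin n) (Fin n) ℂ) : (matAbs A).PosSemidef :=
  by
    unfold matAbs
    rw [Matrix.star_eq_conjTranspose]
    refine Matrix.PosSemidef.mul_mul_conjTranspose_same ?_ _
    refine Matrix.posSemidef_diagonal_iff.mpr fun i => ?_
    exact Complex.zero_le_real.mpr (Real.sqrt_nonneg _)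

/-- Singular values of a complex matrix: the eigenvalues of `|A|`. -/
noncomputable def singVals {n : ℕ} (A : Matrix (Fin n) (Fin n) ℂ) : Fin n → ℝ :=
  (matAbs_posSemidef A).1.eigenvalues

/-- Schatten `p`-norm for `p ∈ [1,∞]`: the `ℓᵖ` norm of the singular values. -/
noncomputable def schatten {n : ℕ} (p : ℝ≥0∞) (A : Matrix (Fin n) (Fin n) ℂ) : ℝ :=
  if p = ⊤ then ⨆ i, singVals A i
  else (∑ i, (singVals A i) ^ p.toReal) ^ (1 / p.toReal)

/-- Real power of a positive semidefinite matrix via its spectral decomposition. -/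
noncomputable def psdRpow {n : ℕ} {A : Matrix (Fin n) (Fin n) ℂ} (hA : A.PosSemidef) (r : ℝ) :
    Matrix (Fin n) (Fin n) ℂ :=
  (hA.1.eigenvectorUnitary : Matrix (Fin n) (Fin n) ℂ) *
    (Matrix.diagonal (fun i => ((hA.1.eigenvalues i ^ r : ℝ) : ℂ))) *
    (star (hA.1.eigenvectorUnitary : Matrix (Fin n) (Fin n) ℂ))

lemma cfc_psd {n : ℕ} (U : Matrix (Fin n) (Fin n) ℂ) (hU : U.IsHermitian) (f : ℝ → ℝ)
    (hf : ∀ x, 0 ≤ f x) : (cfc f U).PosSemidef := by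
  rw [hU.cfc_eq]
  unfold Matrix.IsHermitian.cfc
  have hD : (Matrix.diagonal (RCLike.ofReal ∘ f ∘ hU.eigenvalues) : Matrix (Fin n) (Fin n) ℂ).PosSemidef := by
    rw [Matrix.posSemidef_diagonal_iff]
    intro i
    simpa using Complex.zero_le_real.mpr (hf _)
  have := hD.conjTranspose_mul_mul_same (B := star (hU.eigenvectorUnitary : Matrix (Fin n) (Fin n) ℂ))
  simpa [Matrix.star_eq_conjTranspose, Matrix.mul_assoc] using this

lemma matAbs_eq {n : ℕ} (U : Matrix (Fin n) (Fin n) ℂ) (hU : U.IsHermitian) :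
    matAbs U = cfc (fun x : ℝ => |x|) U := by
  have hA := (Matrix.posSemidef_conjTranspose_mul_self U).1
  calc matAbs U = hA.cfc Real.sqrt := rfl
    _ = cfc Real.sqrt (Uᴴ * U) := (hA.cfc_eq _).symm
    _ = cfc Real.sqrt (cfc (fun x : ℝ => x ^ 2) U) := by rw [cfc_pow_id U 2, hU.eq, pow_two]
    _ = cfc (Real.sqrt ∘ fun x : ℝ => x ^ 2) U :=
        (cfc_comp _ _ U hU Real.continuous_sqrt.continuousOn (continuous_pow 2).continuousOn).symm
    _ = cfc (fun x : ℝ => |x|) U := by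
        congr 1; funext x; exact Real.sqrt_sq_eq_abs x

lemma psdRpow_matAbs {n : ℕ} (U : Matrix (Fin n) (Fin n) ℂ) (hU : U.IsHermitian)
    (r : ℝ) (hr : 0 < r) :
    psdRpow (matAbs_posSemidef U) r = hU.cfc (fun x : ℝ => |x| ^ r) := by
  have hcont : Continuous (fun x : ℝ => x ^ r) := by
    rw [continuous_iff_continuousAt]
    exact fun x => Real.continuousAt_rpow_const x r (Or.inr hr.le)
  have h3 := cfc_comp (fun x : ℝ => x ^ r) (fun x : ℝ => |x|) U hU
    hcont.continuousOn continuous_abs.continuousOn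
  calc psdRpow (matAbs_posSemidef U) r
      = (matAbs_posSemidef U).1.cfc (fun x : ℝ => x ^ r) := rfl
    _ = cfc (fun x : ℝ => x ^ r) (matAbs U) := (Matrix.IsHermitian.cfc_eq _ _).symm
    _ = cfc (fun x : ℝ => x ^ r) (cfc (fun x : ℝ => |x|) U) := by rw [matAbs_eq U hU]
    _ = cfc ((fun x : ℝ => x ^ r) ∘ (fun x : ℝ => |x|)) U := h3.symm
    _ = hU.cfc (fun x : ℝ => |x| ^ r) := by
        rw [Matrix.IsHermitian.cfc_eq]; rfl

lemma trA {n : ℕ} (M : Matrix (Fin n) (Fin n) ℂ) (d e : Fin n → ℝ) :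
    (M * diagonal (fun i => (d i : ℂ)) * Mᴴ * diagonal (fun j => (e j : ℂ))).trace
      = ((∑ j, ∑ i, d i * e j * Complex.normSq (M j i) : ℝ) : ℂ) := by
  push_cast
  simp only [Matrix.trace, Matrix.diag, Matrix.mul_apply, Matrix.diagonal_apply,
    Matrix.conjTranspose_apply, mul_ite, ite_mul, zero_mul, mul_zero,
    Finset.sum_ite_eq, Finset.sum_ite_eq', Finset.mem_univ, if_true,
    Finset.sum_mul, Finset.mul_sum, Complex.star_def]
  refine Finset.sum_congr rfl fun j _ => Finset.sum_congr rfl fun i _ => ?_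
  rw [show M j i * (d i : ℂ) * (starRingEnd ℂ) (M j i) * (e j : ℂ)
      = (M j i * (starRingEnd ℂ) (M j i)) * ((d i : ℂ) * (e j : ℂ)) from by ring,
    Complex.mul_conj]
  ring
lemma trB {n : ℕ} (M : Matrix (Fin n) (Fin n) ℂ) (c : Fin n → ℝ) :
    (Mᴴ * M * diagonal (fun i => (c i : ℂ))).trace
      = ((∑ i, ∑ j, c i * Complex.normSq (M j i) : ℝ) : ℂ) := by
  push_cast
  simp only [Matrix.trace, Matrix.diag, Matrix.mul_apply, Matrix.diagonal_apply,
    Matrix.conjTranspose_apply, mul_ite, ite_mul, zero_mul, mul_zero,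
    Finset.sum_ite_eq, Finset.sum_ite_eq', Finset.mem_univ, if_true,
    Finset.sum_mul, Finset.mul_sum, Complex.star_def]
  refine Finset.sum_congr rfl fun i _ => Finset.sum_congr rfl fun j _ => ?_
  rw [show (starRingEnd ℂ) (M j i) * M j i * (c i : ℂ)
      = (M j i * (starRingEnd ℂ) (M j i)) * (c i : ℂ) from by ring,
    Complex.mul_conj]
  ring
lemma trC {n : ℕ} (M : Matrix (Fin n) (Fin n) ℂ) (c : Fin n → ℝ) :
    (M * Mᴴ * diagonal (fun j => (c j : ℂ))).trace
      = ((∑ j, ∑ i, c j * Complex.normSq (M j i) : ℝ) : ℂ) := by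
  push_cast
  simp only [Matrix.trace, Matrix.diag, Matrix.mul_apply, Matrix.diagonal_apply,
    Matrix.conjTranspose_apply, mul_ite, ite_mul, zero_mul, mul_zero,
    Finset.sum_ite_eq, Finset.sum_ite_eq', Finset.mem_univ, if_true,
    Finset.sum_mul, Finset.mul_sum, Complex.star_def]
  refine Finset.sum_congr rfl fun j _ => Finset.sum_congr rfl fun i _ => ?_
  rw [show M j i * (starRingEnd ℂ) (M j i) * (c j : ℂ)
      = (M j i * (starRingEnd ℂ) (M j i)) * (c j : ℂ) from by ring,
    Complex.mul_conj]
  ring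

lemma holder_w {ι : Type*} [Fintype ι] {p q : ℝ} (hpq : Real.HolderConjugate p q)
    (w a b : ι → ℝ) (hw : ∀ i, 0 ≤ w i) (ha : ∀ i, 0 ≤ a i) (hb : ∀ i, 0 ≤ b i) :
    ∑ i, w i * (a i * b i) ≤
      (∑ i, w i * a i ^ p) ^ (1 / p) * (∑ i, w i * b i ^ q) ^ (1 / q) := by
  have h1 : (1:ℝ)/p + 1/q = 1 := by
    simpa [one_div] using hpq.inv_add_inv_eq_one
  have h := Real.inner_le_Lp_mul_Lq_of_nonneg (s := Finset.univ)
    (f := fun i => w i ^ ((1:ℝ)/p) * a i) (g := fun i => w i ^ ((1:ℝ)/q) * b i) hpq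
    (fun i _ => mul_nonneg (Real.rpow_nonneg (hw i) _) (ha i))
    (fun i _ => mul_nonneg (Real.rpow_nonneg (hw i) _) (hb i))
  simp only [Real.mul_rpow (Real.rpow_nonneg (hw _) _) (ha _),
    Real.mul_rpow (Real.rpow_nonneg (hw _) _) (hb _),
    ← Real.rpow_mul (hw _), one_div_mul_cancel hpq.pos.ne',
    one_div_mul_cancel hpq.symm.pos.ne', Real.rpow_one] at h
  calc ∑ i, w i * (a i * b i)
      = ∑ i, (w i ^ ((1:ℝ)/p) * a i) * (w i ^ ((1:ℝ)/q) * b i) := by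
        refine Finset.sum_congr rfl fun i _ => ?_
        rw [mul_mul_mul_comm, ← Real.rpow_add' (hw i) (by rw [h1]; norm_num), h1,
          Real.rpow_one]
    _ ≤ _ := h


/-- trace Hölder inequality
`|Tr[T U T* V]| ≤ Tr[T*T |U|^p]^(1/p) · Tr[T T* |V|^q]^(1/q)` for Hermitian `U, V`,
arbitrary `T`, and conjugate exponents `1 < p, q < ∞`. -/
theorem trace_holder {n : ℕ} (U V T : Matrix (Fin n) (Fin n) ℂ)
    (hU : U.IsHermitian) (hV : V.IsHermitian)
    (p q : ℝ) (hp : 1 < p) (hq : 1 < q) (hpq : 1 / p + 1 / q = 1) :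
    ‖(T * U * Tᴴ * V).trace‖ ≤
      ((Tᴴ * T * psdRpow (matAbs_posSemidef U) p).trace).re ^ (1 / p) *
      ((T * Tᴴ * psdRpow (matAbs_posSemidef V) q).trace).re ^ (1 / q) := by
  classical
  set W : Matrix (Fin n) (Fin n) ℂ := (hU.eigenvectorUnitary : Matrix (Fin n) (Fin n) ℂ) with hWdef
  set X : Matrix (Fin n) (Fin n) ℂ := (hV.eigenvectorUnitary : Matrix (Fin n) (Fin n) ℂ) with hXdef
  set lam : Fin n → ℝ := hU.eigenvalues with hlam
  set mu : Fin n → ℝ := hV.eigenvalues with hmu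
  set M : Matrix (Fin n) (Fin n) ℂ := Xᴴ * T * W with hM
  have hW1 : W * Wᴴ = 1 := by
    simpa [Matrix.star_eq_conjTranspose] using
      (Matrix.mem_unitaryGroup_iff.mp hU.eigenvectorUnitary.2)
  have hX1 : X * Xᴴ = 1 := by
    simpa [Matrix.star_eq_conjTranspose] using
      (Matrix.mem_unitaryGroup_iff.mp hV.eigenvectorUnitary.2)
  have hUs : U = W * diagonal (fun i => (lam i : ℂ)) * Wᴴ := by
    simpa [Function.comp_def, Matrix.star_eq_conjTranspose] using hU.spectral_theorem
  have hVs : V = X * diagonal (fun j => (mu j : ℂ)) * Xᴴ := by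
    simpa [Function.comp_def, Matrix.star_eq_conjTranspose] using hV.spectral_theorem
  have hp0 : (0:ℝ) < p := lt_trans one_pos hp
  have hq0 : (0:ℝ) < q := lt_trans one_pos hq
  have hPU : psdRpow (matAbs_posSemidef U) p
      = W * diagonal (fun i => ((|lam i| ^ p : ℝ) : ℂ)) * Wᴴ := by
    rw [psdRpow_matAbs U hU p hp0]
    rfl
  have hPV : psdRpow (matAbs_posSemidef V) q
      = X * diagonal (fun j => ((|mu j| ^ q : ℝ) : ℂ)) * Xᴴ := by
    rw [psdRpow_matAbs V hV q hq0]
    rfl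
  have eq1 : (T * U * Tᴴ * V).trace
      = ((∑ j, ∑ i, lam i * mu j * Complex.normSq (M j i) : ℝ) : ℂ) := by
    rw [hUs, hVs]
    rw [show T * (W * diagonal (fun i => (lam i : ℂ)) * Wᴴ) * Tᴴ *
        (X * diagonal (fun j => (mu j : ℂ)) * Xᴴ)
        = (T * (W * diagonal (fun i => (lam i : ℂ)) * Wᴴ) * Tᴴ *
          (X * diagonal (fun j => (mu j : ℂ)))) * Xᴴ from by
        simp only [Matrix.mul_assoc]]
    rw [Matrix.trace_mul_comm]
    rw [show Xᴴ * (T * (W * diagonal (fun i => (lam i : ℂ)) * Wᴴ) * Tᴴ *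
          (X * diagonal (fun j => (mu j : ℂ))))
        = M * diagonal (fun i => (lam i : ℂ)) * Mᴴ * diagonal (fun j => (mu j : ℂ)) from by
        simp only [hM, Matrix.conjTranspose_mul, Matrix.conjTranspose_conjTranspose,
          Matrix.mul_assoc]]
    exact trA M lam mu
  have eq2 : (Tᴴ * T * psdRpow (matAbs_posSemidef U) p).trace
      = ((∑ i, ∑ j, |lam i| ^ p * Complex.normSq (M j i) : ℝ) : ℂ) := by
    rw [hPU]
    rw [show Tᴴ * T * (W * diagonal (fun i => ((|lam i| ^ p : ℝ) : ℂ)) * Wᴴ)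
        = (Tᴴ * T * (W * diagonal (fun i => ((|lam i| ^ p : ℝ) : ℂ)))) * Wᴴ from by
        simp only [Matrix.mul_assoc]]
    rw [Matrix.trace_mul_comm]
    rw [show Wᴴ * (Tᴴ * T * (W * diagonal (fun i => ((|lam i| ^ p : ℝ) : ℂ))))
        = Mᴴ * M * diagonal (fun i => ((|lam i| ^ p : ℝ) : ℂ)) from by
        simp only [hM, Matrix.conjTranspose_mul, Matrix.conjTranspose_conjTranspose,
          Matrix.mul_assoc]
        rw [show X * (Xᴴ * (T * (W * diagonal (fun i => ((|lam i| ^ p : ℝ) : ℂ)))))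
            = (X * Xᴴ) * (T * (W * diagonal (fun i => ((|lam i| ^ p : ℝ) : ℂ)))) from
            (Matrix.mul_assoc _ _ _).symm, hX1, Matrix.one_mul]]
    exact trB M _
  have eq3 : (T * Tᴴ * psdRpow (matAbs_posSemidef V) q).trace
      = ((∑ j, ∑ i, |mu j| ^ q * Complex.normSq (M j i) : ℝ) : ℂ) := by
    rw [hPV]
    rw [show T * Tᴴ * (X * diagonal (fun j => ((|mu j| ^ q : ℝ) : ℂ)) * Xᴴ)
        = (T * Tᴴ * (X * diagonal (fun j => ((|mu j| ^ q : ℝ) : ℂ)))) * Xᴴ from by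
        simp only [Matrix.mul_assoc]]
    rw [Matrix.trace_mul_comm]
    rw [show Xᴴ * (T * Tᴴ * (X * diagonal (fun j => ((|mu j| ^ q : ℝ) : ℂ))))
        = M * Mᴴ * diagonal (fun j => ((|mu j| ^ q : ℝ) : ℂ)) from by
        simp only [hM, Matrix.conjTranspose_mul, Matrix.conjTranspose_conjTranspose,
          Matrix.mul_assoc]
        rw [show W * (Wᴴ * (Tᴴ * (X * diagonal (fun j => ((|mu j| ^ q : ℝ) : ℂ)))))
            = (W * Wᴴ) * (Tᴴ * (X * diagonal (fun j => ((|mu j| ^ q : ℝ) : ℂ)))) from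
            (Matrix.mul_assoc _ _ _).symm, hW1, Matrix.one_mul]]
    exact trC M _
  rw [eq1, eq2, eq3, Complex.norm_real, Real.norm_eq_abs, Complex.ofReal_re, Complex.ofReal_re]
  have hpq' : Real.HolderConjugate p q := Real.holderConjugate_iff.mpr ⟨hp, by simpa [one_div] using hpq⟩
  have key := holder_w (ι := Fin n × Fin n) hpq'
    (fun ji => Complex.normSq (M ji.1 ji.2)) (fun ji => |lam ji.2|) (fun ji => |mu ji.1|)
    (fun ji => Complex.normSq_nonneg _) (fun _ => abs_nonneg _) (fun _ => abs_nonneg _)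
  calc |∑ j, ∑ i, lam i * mu j * Complex.normSq (M j i)|
      ≤ ∑ j, ∑ i, Complex.normSq (M j i) * (|lam i| * |mu j|) := by
        refine (Finset.abs_sum_le_sum_abs _ _).trans ?_
        refine Finset.sum_le_sum fun j _ => ?_
        refine (Finset.abs_sum_le_sum_abs _ _).trans ?_
        refine Finset.sum_le_sum fun i _ => ?_
        rw [abs_mul, abs_mul, abs_of_nonneg (Complex.normSq_nonneg _)]
        apply le_of_eq; ring
    _ = ∑ ji : Fin n × Fin n, Complex.normSq (M ji.1 ji.2) * (|lam ji.2| * |mu ji.1|) := by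
        rw [Fintype.sum_prod_type]
    _ ≤ _ := by
        refine key.trans (le_of_eq ?_)
        congr 1
        · congr 1
          rw [Fintype.sum_prod_type, Finset.sum_comm]
          exact Finset.sum_congr rfl fun i _ => Finset.sum_congr rfl fun j _ => by ring
        · congr 1
          rw [Fintype.sum_prod_type]
          exact Finset.sum_congr rfl fun j _ => Finset.sum_congr rfl fun i _ => by ring
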